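/- arXiv:0904.0342 — 2 statements merged into one kernel-verified Lean document; each statement's English description precedes it below -/
import Mathlib

section
/- Abstract Rosser incompleteness: Let S be a consistent formal system with a provability relation ⊢, and suppose there are formulas g(a,b) and h(a,b) numeralwise expressing the predicates G(a,b) ('b codes a proof in S of the diagonalization A_a(ā)') and H(a,b) ('b codes a proof in S of ¬A_a(ā)'), and let q be the Gödel number of the formula ∀b (g(a,b) → ∃c (c ≤ b ∧ h(a,c))). Then neither A_q(q̄) nor ¬A_q(q̄) is provable in S. -/
/-- Abstract Rosser incompleteness theorem.

`Formula` is the type of formulas of the system `S`, `Prov` its provability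
predicate, `neg` negation.  `ProofOf b F` means "the natural number `b` codes a
proof in `S` of `F`", and provability means having a coded proof.  `D a` is the
diagonalization `A_a(ā)` of the formula with Gödel number `a`.  The formulas
`gF a b` (resp. `hF a b`) are `g(ā, b̄)` (resp. `h(ā, b̄)`), numeralwise
expressing the predicates `G(a,b)` : "`b` codes a proof of `A_a(ā)`" and
`H(a,b)` : "`b` codes a proof of `¬A_a(ā)`".  `q` is the Gödel number of the
Rosser formula `∀b (g(a,b) → ∃c (c ≤ b ∧ h(a,c)))`, so that `D q` is the Rosser
sentence; the two closure hypotheses express the finitely many first-order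
deductions used in Rosser's argument.  If `S` is consistent, then neither
`A_q(q̄)` nor `¬A_q(q̄)` is provable. -/
theorem rosser_incompleteness
    (Formula : Type) (Prov : Formula → Prop) (neg : Formula → Formula)
    (ProofOf : ℕ → Formula → Prop)
    (hProv : ∀ F, Prov F ↔ ∃ b, ProofOf b F)
    (D : ℕ → Formula)
    (gF hF : ℕ → ℕ → Formula)
    (hg_true : ∀ a b, ProofOf b (D a) → Prov (gF a b))
    (hg_false : ∀ a b, ¬ ProofOf b (D a) → Prov (neg (gF a b)))
    (hh_true : ∀ a b, ProofOf b (neg (D a)) → Prov (hF a b))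
    (hh_false : ∀ a b, ¬ ProofOf b (neg (D a)) → Prov (neg (hF a b)))
    (q : ℕ)
    (closure1 : ∀ e, Prov (gF q e) →
      (∀ d, d ≤ e → Prov (neg (hF q d))) → Prov (neg (D q)))
    (closure2 : ∀ k, Prov (hF q k) →
      (∀ d, d < k → Prov (neg (gF q d))) → Prov (D q))
    (consistent : ¬ ∃ B, Prov B ∧ Prov (neg B)) :
    ¬ Prov (D q) ∧ ¬ Prov (neg (D q)) := by
  constructor
  · intro hP
    obtain ⟨e, he⟩ := (hProv (D q)).mp hP
    have hneg : Prov (neg (D q)) := by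
      apply closure1 e (hg_true q e he)
      intro d _
      apply hh_false
      intro hd
      exact consistent ⟨D q, hP, (hProv _).mpr ⟨d, hd⟩⟩
    exact consistent ⟨D q, hP, hneg⟩
  · intro hN
    obtain ⟨k, hk⟩ := (hProv (neg (D q))).mp hN
    have hpos : Prov (D q) := by
      apply closure2 k (hh_true q k hk)
      intro d _
      apply hg_false
      intro hd
      exact consistent ⟨D q, (hProv _).mpr ⟨d, hd⟩, hN⟩
    exact consistent ⟨D q, hpos, hN⟩
end

section
/- Abstract first Gödel incompleteness theorem: Let S be a formal system with a formula g(a,b) numeralwise expressing the predicate 'b codes a proof in S of A_a(ā)', and let p be the Gödel number of ∀b ¬g(a,b). If S is consistent, then A_p(p̄) is not provable in S; if moreover S is ω-consistent, then ¬A_p(p̄) is not provable in S. -/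
/-- Abstract first Gödel incompleteness theorem.

`ProofOf b F` means "`b` codes a proof in `S` of `F`", and provability means
having a coded proof.  `D p` is the Gödel sentence `A_p(p̄) = ∀b ¬g(p̄,b)`,
where `p` is the Gödel number of `∀b ¬g(a,b)` and `gF p b` is the formula
`g(p̄, b̄)` numeralwise expressing "`b` codes a proof of `A_p(p̄)`".
`existIntro` is existential introduction from a numeral instance: from
`g(p̄, b̄)` the system derives `¬∀b ¬g(p̄,b)`, i.e. `¬A_p(p̄)`.
If `S` is consistent then `A_p(p̄)` is not provable; if moreover `S` is
ω-consistent (the inner antecedent: from `⊢ ¬g(p̄,n̄)` for every `n` it never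
also proves `¬∀b ¬g(p̄,b)`), then `¬A_p(p̄)` is not provable. -/
theorem godel_first_incompleteness
    (Formula : Type) (Prov : Formula → Prop) (neg : Formula → Formula)
    (ProofOf : ℕ → Formula → Prop)
    (hProv : ∀ F, Prov F ↔ ∃ b, ProofOf b F)
    (D : ℕ → Formula)
    (gF : ℕ → ℕ → Formula)
    (hg_true : ∀ a b, ProofOf b (D a) → Prov (gF a b))
    (hg_false : ∀ a b, ¬ ProofOf b (D a) → Prov (neg (gF a b)))
    (p : ℕ)
    (existIntro : ∀ b, Prov (gF p b) → Prov (neg (D p)))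
    (consistent : ¬ ∃ B, Prov B ∧ Prov (neg B)) :
    ¬ Prov (D p) ∧
      (((∀ n : ℕ, Prov (neg (gF p n))) → ¬ Prov (neg (D p))) →
        ¬ Prov (neg (D p))) := by
  have hnD : ¬ Prov (D p) := by
    intro h
    obtain ⟨b, hb⟩ := (hProv (D p)).1 h
    exact consistent ⟨D p, h, existIntro b (hg_true p b hb)⟩
  refine ⟨hnD, fun hω => hω fun n => ?_⟩
  exact hg_false p n (fun hn => hnD ((hProv (D p)).2 ⟨n, hn⟩))
end
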